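/- The birational inverse of the projection π_L : s(P^2 × P^1) ⇢ P^3 from the line L = F_1 ∩ F_2 is given by a linear system of quadric surfaces in P^3 whose base locus is B ∪ {P}, where P = π_L(F_1) and B = π_L(F_2). -/

import Mathlib

open Projectivization Set

/-- `ℙ^(n-1)`-style projective space of the vector space `Fin n → k`. -/
abbrev Pk (k : Type*) [Field k] (n : ℕ) := Projectivization k (Fin n → k)

/-- Segre map on vectors. -/
def segV (k : Type*) [Field k] (x : Fin 3 → k) (y : Fin 2 → k) : Fin 6 → k :=
  fun i => x ⟨i.1 / 2, by have := i.2; omega⟩ * y ⟨i.1 % 2, by omega⟩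

theorem segV_ne_zero (k : Type*) [Field k] {x : Fin 3 → k} {y : Fin 2 → k}
    (hx : x ≠ 0) (hy : y ≠ 0) : segV k x y ≠ 0 := by
  obtain ⟨a, ha⟩ := Function.ne_iff.mp hx
  obtain ⟨b, hb⟩ := Function.ne_iff.mp hy
  intro h
  have ha2 := a.2
  have hb2 := b.2
  have h6 : 2 * a.1 + b.1 < 6 := by omega
  have hkey := congrFun h ⟨2 * a.1 + b.1, h6⟩
  simp only [segV, Pi.zero_apply] at hkey
  have e1 : (⟨(2 * a.1 + b.1) / 2, by omega⟩ : Fin 3) = a := Fin.ext (by simp; omega)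
  have e2 : (⟨(2 * a.1 + b.1) % 2, by omega⟩ : Fin 2) = b := Fin.ext (by simp; omega)
  rw [e1, e2] at hkey
  exact (mul_ne_zero ha hb) hkey

/-- The Segre embedding `s : ℙ² × ℙ¹ → ℙ⁵`. -/
noncomputable def segre (k : Type*) [Field k] (p : Pk k 3) (q : Pk k 2) : Pk k 6 :=
  Projectivization.mk k (segV k p.rep q.rep) (segV_ne_zero k p.rep_nonzero q.rep_nonzero)

/-- The Segre threefold `X = s(ℙ² × ℙ¹) ⊆ ℙ⁵`. -/
def SegreX (k : Type*) [Field k] : Set (Pk k 6) := {z | ∃ p q, z = segre k p q}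

/-- The set of points of projective space lying in a linear subspace `W`. -/
def projLin {k : Type*} [Field k] {n : ℕ} (W : Submodule k (Fin n → k)) : Set (Pk k n) :=
  {p | p.rep ∈ W}

/-- The plane `F₁ = s(ℙ² × {a})` of the ruling. -/
def F1set (k : Type*) [Field k] (a : Pk k 2) : Set (Pk k 6) := {z | ∃ p, z = segre k p a}
/-- The quadric surface `F₂ = s(l × ℙ¹)` for a line `l ⊆ ℙ²` (given by a 2-dimensional
vector subspace of `Fin 3 → k`). -/
def F2set (k : Type*) [Field k] (l : Submodule k (Fin 3 → k)) : Set (Pk k 6) :=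
  {z | ∃ p q, p.rep ∈ l ∧ z = segre k p q}

/-- The 2-dimensional vector subspace corresponding to the line `L = F₁ ∩ F₂ ⊆ ℙ⁵`. -/
def WL (k : Type*) [Field k] (l : Submodule k (Fin 3 → k)) (a : Pk k 2) :
    Submodule k (Fin 6 → k) :=
  Submodule.span k {v | ∃ x ∈ l, v = segV k x a.rep}

/-- A subset of projective space is (Zariski-)closed algebraic iff it is the common zero set
of a family of homogeneous polynomials. -/
def AlgSet {k : Type*} [Field k] {n : ℕ} (S : Set (Pk k n)) : Prop :=
  ∃ T : Set (MvPolynomial (Fin n) k), (∀ f ∈ T, ∃ d, f.IsHomogeneous d) ∧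
    S = {p | ∀ f ∈ T, MvPolynomial.eval p.rep f = 0}

/-- The linear projection `ℙ⁵ ⇢ ℙ³` induced by a linear map `π` (defined away from the
projectivization of `ker π`, junk value elsewhere). -/
noncomputable def projFrom (k : Type*) [Field k] (π : (Fin 6 → k) →ₗ[k] (Fin 4 → k))
    (p : Pk k 6) : Pk k 4 :=
  letI := Classical.propDecidable
  if h : π p.rep ≠ 0 then Projectivization.mk k (π p.rep) h
  else Projectivization.mk k (fun _ => 1) (fun h0 => one_ne_zero (congrFun h0 0))

-- AUX LEMMAS
lemma segV_add_left (k : Type*) [Field k] (x x' : Fin 3 → k) (y : Fin 2 → k) :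
    segV k (x + x') y = segV k x y + segV k x' y := by
  funext m; simp [segV]; ring

lemma segV_smul_left (k : Type*) [Field k] (c : k) (x : Fin 3 → k) (y : Fin 2 → k) :
    segV k (c • x) y = c • segV k x y := by
  funext m; simp [segV]; ring

lemma segV_add_right (k : Type*) [Field k] (x : Fin 3 → k) (y y' : Fin 2 → k) :
    segV k x (y + y') = segV k x y + segV k x y' := by
  funext m; simp [segV]; ring

lemma segV_smul_right (k : Type*) [Field k] (c : k) (x : Fin 3 → k) (y : Fin 2 → k) :
    segV k x (c • y) = c • segV k x y := by
  funext m; simp [segV]; ring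

lemma segV_expand (k : Type*) [Field k] (u0 u1 u2 v0 v1 : k) (x0 x1 x2 : Fin 3 → k)
    (y0 y1 : Fin 2 → k) :
    segV k (u0•x0+u1•x1+u2•x2) (v0•y0+v1•y1) =
    (u0*v0)•segV k x0 y0 + (u0*v1)•segV k x0 y1 + (u1*v0)•segV k x1 y0 + (u1*v1)•segV k x1 y1
      + (u2*v0)•segV k x2 y0 + (u2*v1)•segV k x2 y1 := by
  funext m; simp [segV]; ring

lemma tensor_indep {k : Type*} [Field k] {x0 x1 x2 : Fin 3 → k} {y0 y1 : Fin 2 → k}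
    (hx : LinearIndependent k ![x0,x1,x2]) (hy : LinearIndependent k ![y0,y1]) :
    LinearIndependent k ![segV k x0 y0, segV k x0 y1, segV k x1 y0, segV k x1 y1,
      segV k x2 y0, segV k x2 y1] := by
  rw [Fintype.linearIndependent_iff] at hx hy ⊢
  intro c hc
  have key : ∀ i : Fin 3, ∀ j : Fin 2,
      c 0 * (x0 i * y0 j) + c 1 * (x0 i * y1 j) + c 2 * (x1 i * y0 j)
        + c 3 * (x1 i * y1 j) + c 4 * (x2 i * y0 j) + c 5 * (x2 i * y1 j) = 0 := by
    intro i j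
    have h2 : (2 * i.1 + j.1 : ℕ) < 6 := by omega
    have := congrFun hc ⟨2 * i.1 + j.1, h2⟩
    simp only [Fin.sum_univ_six, Pi.add_apply, Pi.smul_apply, smul_eq_mul, Pi.zero_apply,
      Matrix.cons_val_zero, Matrix.cons_val_one, Matrix.head_cons] at this
    have e1 : (⟨(2 * i.1 + j.1) / 2, by omega⟩ : Fin 3) = i := Fin.ext (by simp; omega)
    have e2 : (⟨(2 * i.1 + j.1) % 2, by omega⟩ : Fin 2) = j := Fin.ext (by simp; omega)
    simpa [segV, e1, e2, Fin.isValue, Nat.mod_eq_of_lt j.isLt] using this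
  have hw : ∀ i : Fin 3, (c 0 * x0 i + c 2 * x1 i + c 4 * x2 i) = 0 ∧
      (c 1 * x0 i + c 3 * x1 i + c 5 * x2 i) = 0 := by
    intro i
    have hyy := hy ![c 0 * x0 i + c 2 * x1 i + c 4 * x2 i, c 1 * x0 i + c 3 * x1 i + c 5 * x2 i]
      (by
        funext j
        have := key i j
        simp [Fin.sum_univ_two]
        ring_nf
        ring_nf at this
        linear_combination this)
    exact ⟨hyy 0, hyy 1⟩
  have hx0 := hx ![c 0, c 2, c 4] (by
    funext i
    have := (hw i).1
    simp [Fin.sum_univ_three]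
    linear_combination this)
  have hx1 := hx ![c 1, c 3, c 5] (by
    funext i
    have := (hw i).2
    simp [Fin.sum_univ_three]
    linear_combination this)
  intro s
  fin_cases s
  · exact hx0 0
  · exact hx1 0
  · exact hx0 1
  · exact hx1 1
  · exact hx0 2
  · exact hx1 2

lemma rep_mk {k : Type*} [Field k] {n : ℕ} (v : Fin n → k) (hv : v ≠ 0) :
    ∃ c : k, c ≠ 0 ∧ (Projectivization.mk k v hv).rep = c • v := by
  have h := Projectivization.mk_rep (Projectivization.mk k v hv)
  rw [Projectivization.mk_eq_mk_iff] at h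
  obtain ⟨u, hu⟩ := h
  exact ⟨(u : k), u.ne_zero, hu.symm⟩

lemma indep_pair {k : Type*} [Field k] {y0 y1 : Fin 2 → k} (h0 : y0 ≠ 0)
    (h1 : y1 ∉ Submodule.span k {y0}) : LinearIndependent k ![y0, y1] := by
  rw [Fintype.linearIndependent_iff]
  intro g hg
  simp only [Fin.sum_univ_two, Matrix.cons_val_zero, Matrix.cons_val_one, Matrix.head_cons] at hg
  have hg1 : g 1 = 0 := by
    by_contra h
    apply h1
    rw [Submodule.mem_span_singleton]
    refine ⟨(g 1)⁻¹ * (-(g 0)), ?_⟩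
    have h2 : g 1 • y1 = (-(g 0)) • y0 := by
      rw [neg_smul]; exact eq_neg_of_add_eq_zero_right hg
    rw [mul_smul, ← h2, inv_smul_smul₀ h]
  have hg0 : g 0 = 0 := by
    rw [hg1, zero_smul, add_zero, smul_eq_zero] at hg
    exact hg.resolve_right h0
  intro i; fin_cases i
  · exact hg0
  · exact hg1

lemma indep_triple {k : Type*} [Field k] {l : Submodule k (Fin 3 → k)} {x0 x1 x2 : Fin 3 → k}
    (h1 : x1 ∈ l) (h2 : x2 ∈ l) (h0 : x0 ∉ l) (h12 : LinearIndependent k ![x1, x2]) :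
    LinearIndependent k ![x0, x1, x2] := by
  rw [Fintype.linearIndependent_iff] at h12 ⊢
  intro g hg
  simp only [Fin.sum_univ_three, Matrix.cons_val_zero, Matrix.cons_val_one, Matrix.head_cons,
    Matrix.cons_val_two, Matrix.tail_cons] at hg
  have hg0 : g 0 = 0 := by
    by_contra h
    apply h0
    have hg' : g 0 • x0 + (g 1 • x1 + g 2 • x2) = 0 := by rw [← add_assoc]; exact hg
    have h2' : g 0 • x0 = -(g 1 • x1 + g 2 • x2) := eq_neg_of_add_eq_zero_left hg'
    have : x0 = (g 0)⁻¹ • (-(g 1 • x1 + g 2 • x2)) := by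
      rw [← h2', inv_smul_smul₀ h]
    rw [this]
    exact Submodule.smul_mem _ _ (Submodule.neg_mem _
      (Submodule.add_mem _ (Submodule.smul_mem _ _ h1) (Submodule.smul_mem _ _ h2)))
  have h12' := h12 ![g 1, g 2] (by
    rw [hg0, zero_smul, zero_add] at hg
    simpa [Fin.sum_univ_two] using hg)
  intro i; fin_cases i
  · exact hg0
  · exact h12' 0
  · exact h12' 1

set_option maxHeartbeats 1000000 in
/-- the birational inverse of the projection π_L : s(ℙ² × ℙ¹) ⇢ ℙ³ from the
line L = F₁ ∩ F₂ is given by a linear system of quadric surfaces of ℙ³ whose base locus is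
B ∪ {P}, where P = π_L(F₁) and B = π_L(F₂). -/
theorem statement4 (k : Type*) [Field k] [IsAlgClosed k]
    (a : Pk k 2) (l : Submodule k (Fin 3 → k)) (hl : Module.finrank k l = 2)
    (π : (Fin 6 → k) →ₗ[k] (Fin 4 → k)) (hπ : Function.Surjective π)
    (hker : LinearMap.ker π = WL k l a)
    (P0 : Pk k 4) (WB : Submodule k (Fin 4 → k))
    (hP0 : projFrom k π '' (F1set k a \ projLin (WL k l a)) = {P0})
    (hB : projFrom k π '' (F2set k l \ projLin (WL k l a)) = projLin WB) :
    ∃ Q : Fin 6 → MvPolynomial (Fin 4) k,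
      (∀ i, (Q i).IsHomogeneous 2) ∧
      {q : Pk k 4 | ∀ i, MvPolynomial.eval q.rep (Q i) = 0} = projLin WB ∪ {P0} ∧
      ∀ p ∈ SegreX k, p ∉ F1set k a → p ∉ F2set k l →
        ∃ h : (fun i => MvPolynomial.eval (projFrom k π p).rep (Q i)) ≠ 0,
          Projectivization.mk k _ h = p := by
  classical
  -- basis of l
  obtain ⟨x1, x2, hx1l, hx2l, h12⟩ : ∃ x1 x2 : Fin 3 → k, x1 ∈ l ∧ x2 ∈ l ∧
      LinearIndependent k ![x1, x2] := by
    let bl := Module.finBasisOfFinrankEq k l hl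
    refine ⟨bl 0, bl 1, (bl 0).2, (bl 1).2, ?_⟩
    have h := bl.linearIndependent.map' l.subtype (Submodule.ker_subtype l)
    have he : (![((bl 0 : l) : Fin 3 → k), ((bl 1 : l) : Fin 3 → k)] : Fin 2 → Fin 3 → k)
        = (l.subtype ∘ bl) := by
      funext i; fin_cases i <;> rfl
    rw [he]; exact h
  have hspan : Submodule.span k {x1, x2} = l := by
    apply Submodule.eq_of_le_of_finrank_le
    · rw [Submodule.span_le]
      rintro v hv
      rcases hv with rfl | rfl
      · exact hx1l
      · exact hx2l
    · rw [hl]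
      have hr : Set.range ![x1, x2] = {x1, x2} := by
        simp [Matrix.range_cons, Matrix.range_empty, Set.pair_comm]
      have h2 : Module.finrank k (Submodule.span k {x1, x2}) = 2 := by
        rw [← hr, finrank_span_eq_card h12]; simp
      rw [h2]
  -- x0 outside l
  have hlne : l ≠ ⊤ := by
    intro h
    rw [h, finrank_top, Module.finrank_fin_fun] at hl
    norm_num at hl
  obtain ⟨x0, hx0l⟩ : ∃ x0, x0 ∉ l := by
    by_contra h
    push_neg at h
    exact hlne (Submodule.eq_top_iff'.mpr h)
  have hX : LinearIndependent k ![x0, x1, x2] := indep_triple hx1l hx2l hx0l h12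
  -- y's
  obtain ⟨y0, hy0def⟩ : ∃ y0, y0 = a.rep := ⟨a.rep, rfl⟩
  have hy0 : y0 ≠ 0 := hy0def ▸ a.rep_nonzero
  obtain ⟨y1, hy1sp⟩ : ∃ y1, y1 ∉ Submodule.span k {y0} := by
    by_contra h
    push_neg at h
    have htop : Submodule.span k {y0} = ⊤ := Submodule.eq_top_iff'.mpr h
    have h1 := finrank_span_singleton (K := k) hy0
    rw [htop, finrank_top, Module.finrank_fin_fun] at h1
    norm_num at h1
  have hY : LinearIndependent k ![y0, y1] := indep_pair hy0 hy1sp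
  have hy1 : y1 ≠ 0 := fun h => hy1sp (h ▸ Submodule.zero_mem _)
  -- six tensors independence, usable form
  have hT6 : ∀ c0 c1 c2 c3 c4 c5 : k,
      c0 • segV k x0 y0 + c1 • segV k x0 y1 + c2 • segV k x1 y0 + c3 • segV k x1 y1
        + c4 • segV k x2 y0 + c5 • segV k x2 y1 = 0 →
      c0 = 0 ∧ c1 = 0 ∧ c2 = 0 ∧ c3 = 0 ∧ c4 = 0 ∧ c5 = 0 := by
    intro c0 c1 c2 c3 c4 c5 h
    have hT := tensor_indep hX hY
    rw [Fintype.linearIndependent_iff] at hT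
    have hh := hT ![c0,c1,c2,c3,c4,c5]
      (by simpa [Fin.sum_univ_six] using h)
    exact ⟨hh 0, hh 1, hh 2, hh 3, hh 4, hh 5⟩
  have h12' : ∀ s t : k, s • x1 + t • x2 = 0 → s = 0 ∧ t = 0 := by
    intro s t h
    have h12c := h12
    rw [Fintype.linearIndependent_iff] at h12c
    have hh := h12c ![s, t] (by simpa [Fin.sum_univ_two] using h)
    exact ⟨hh 0, hh 1⟩
  -- decompositions
  have hXdec : ∀ x : Fin 3 → k, ∃ u0 u1 u2 : k, x = u0•x0 + u1•x1 + u2•x2 := by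
    intro x
    have hcard : Fintype.card (Fin 3) = Module.finrank k (Fin 3 → k) := by
      simp [Module.finrank_fin_fun]
    let bX := basisOfLinearIndependentOfCardEqFinrank hX hcard
    have hb : ∀ i, bX i = ![x0, x1, x2] i :=
      fun i => congrFun (coe_basisOfLinearIndependentOfCardEqFinrank hX hcard) i
    refine ⟨bX.repr x 0, bX.repr x 1, bX.repr x 2, ?_⟩
    have := bX.sum_repr x
    rw [Fin.sum_univ_three, hb 0, hb 1, hb 2] at this
    simpa using this.symm
  have hYdec : ∀ y : Fin 2 → k, ∃ v0 v1 : k, y = v0•y0 + v1•y1 := by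
    intro y
    have hcard : Fintype.card (Fin 2) = Module.finrank k (Fin 2 → k) := by
      simp [Module.finrank_fin_fun]
    let bY := basisOfLinearIndependentOfCardEqFinrank hY hcard
    have hb : ∀ i, bY i = ![y0, y1] i :=
      fun i => congrFun (coe_basisOfLinearIndependentOfCardEqFinrank hY hcard) i
    refine ⟨bY.repr y 0, bY.repr y 1, ?_⟩
    have := bY.sum_repr y
    rw [Fin.sum_univ_two, hb 0, hb 1] at this
    simpa using this.symm
  -- WL description
  have hWL : WL k l a = Submodule.span k {segV k x1 y0, segV k x2 y0} := by
    apply le_antisymm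
    · rw [WL, Submodule.span_le]
      rintro v ⟨x, hxl, rfl⟩
      rw [← hspan] at hxl
      obtain ⟨s, t, hst⟩ := Submodule.mem_span_pair.mp hxl
      have he : segV k x a.rep = s • segV k x1 y0 + t • segV k x2 y0 := by
        rw [← hy0def, ← hst, segV_add_left, segV_smul_left, segV_smul_left]
      rw [he]
      exact Submodule.add_mem _
        (Submodule.smul_mem _ _ (Submodule.subset_span (by simp)))
        (Submodule.smul_mem _ _ (Submodule.subset_span (by simp)))
    · rw [Submodule.span_le]
      rintro v hv
      rcases hv with rfl | rfl
      · exact Submodule.subset_span ⟨x1, hx1l, by rw [hy0def]⟩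
      · exact Submodule.subset_span ⟨x2, hx2l, by rw [hy0def]⟩
  have hπT2 : π (segV k x1 y0) = 0 := by
    have hm : segV k x1 y0 ∈ WL k l a := by
      rw [hWL]; exact Submodule.subset_span (by simp)
    rw [← hker] at hm; exact hm
  have hπT4 : π (segV k x2 y0) = 0 := by
    have hm : segV k x2 y0 ∈ WL k l a := by
      rw [hWL]; exact Submodule.subset_span (by simp)
    rw [← hker] at hm; exact hm
  -- basis of k^4 adapted to the projection
  have hcard4 : Fintype.card (Fin 4) = Module.finrank k (Fin 4 → k) := by
    simp [Module.finrank_fin_fun]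
  have hC : LinearIndependent k
      ![π (segV k x0 y0), π (segV k x0 y1), π (segV k x1 y1), π (segV k x2 y1)] := by
    rw [Fintype.linearIndependent_iff]
    intro g hg
    rw [Fin.sum_univ_four] at hg
    simp only [Matrix.cons_val_zero, Matrix.cons_val_one, Matrix.head_cons,
      Matrix.cons_val_two, Matrix.tail_cons, Matrix.cons_val_three] at hg
    have hmem : g 0 • segV k x0 y0 + g 1 • segV k x0 y1 + g 2 • segV k x1 y1
        + g 3 • segV k x2 y1 ∈ LinearMap.ker π := by
      rw [LinearMap.mem_ker, map_add, map_add, map_add, map_smul, map_smul, map_smul, map_smul]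
      exact hg
    rw [hker, hWL] at hmem
    obtain ⟨e, f, hef⟩ := Submodule.mem_span_pair.mp hmem
    have hz : g 0 • segV k x0 y0 + g 1 • segV k x0 y1 + (-e) • segV k x1 y0
        + g 2 • segV k x1 y1 + (-f) • segV k x2 y0 + g 3 • segV k x2 y1 = 0 := by
      have hrearr : g 0 • segV k x0 y0 + g 1 • segV k x0 y1 + (-e) • segV k x1 y0
          + g 2 • segV k x1 y1 + (-f) • segV k x2 y0 + g 3 • segV k x2 y1
          = (g 0 • segV k x0 y0 + g 1 • segV k x0 y1 + g 2 • segV k x1 y1 + g 3 • segV k x2 y1)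
            - (e • segV k x1 y0 + f • segV k x2 y0) := by module
      rw [hrearr, ← hef, sub_self]
    obtain ⟨e0, e1, e2, e3, e4, e5⟩ := hT6 _ _ _ _ _ _ hz
    intro i
    fin_cases i
    · exact e0
    · exact e1
    · exact e3
    · exact e5
  obtain ⟨bC, hbC⟩ : ∃ bC : Module.Basis (Fin 4) k (Fin 4 → k), ∀ i, bC i =
      ![π (segV k x0 y0), π (segV k x0 y1), π (segV k x1 y1), π (segV k x2 y1)] i :=
    ⟨basisOfLinearIndependentOfCardEqFinrank hC hcard4,
      fun i => congrFun (coe_basisOfLinearIndependentOfCardEqFinrank hC hcard4) i⟩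
  have hψ : ∀ (i j : Fin 4), bC.equivFun
      (![π (segV k x0 y0), π (segV k x0 y1), π (segV k x1 y1), π (segV k x2 y1)] i) j
      = if i = j then 1 else 0 := by
    intro i j; rw [← hbC i]; exact bC.equivFun_self i j
  have hψ0 : ∀ j, bC.equivFun (π (segV k x0 y0)) j = if (0:Fin 4) = j then 1 else 0 := by
    intro j; simpa using hψ 0 j
  have hψ1 : ∀ j, bC.equivFun (π (segV k x0 y1)) j = if (1:Fin 4) = j then 1 else 0 := by
    intro j; simpa using hψ 1 j
  have hψ2 : ∀ j, bC.equivFun (π (segV k x1 y1)) j = if (2:Fin 4) = j then 1 else 0 := by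
    intro j; simpa using hψ 2 j
  have hψ3 : ∀ j, bC.equivFun (π (segV k x2 y1)) j = if (3:Fin 4) = j then 1 else 0 := by
    intro j; simpa using hψ 3 j
  -- the key coordinate computation for the projection
  have hσ : ∀ u0 u1 u2 v0 v1 : k,
      bC.equivFun (π (segV k (u0•x0+u1•x1+u2•x2) (v0•y0+v1•y1)))
        = ![u0*v0, u0*v1, u1*v1, u2*v1] := by
    intro u0 u1 u2 v0 v1
    rw [segV_expand]
    funext j
    simp only [map_add, map_smul, hπT2, hπT4, smul_zero, add_zero, zero_add, Pi.add_apply,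
      Pi.smul_apply, smul_eq_mul, hψ0 j, hψ1 j, hψ2 j, hψ3 j]
    fin_cases j <;> simp
  -- the linear forms
  obtain ⟨L, hLhom, hLeval⟩ : ∃ L : Fin 4 → MvPolynomial (Fin 4) k,
      (∀ j, (L j).IsHomogeneous 1) ∧
      (∀ (r : Fin 4 → k) (j : Fin 4), MvPolynomial.eval r (L j) = bC.equivFun r j) := by
    refine ⟨fun j => ∑ m : Fin 4, MvPolynomial.C
      (bC.equivFun (fun s => if m = s then (1:k) else 0) j) * MvPolynomial.X m, ?_, ?_⟩
    · intro j
      apply MvPolynomial.IsHomogeneous.sum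
      intro m _
      simpa using (MvPolynomial.isHomogeneous_C (Fin 4)
        (bC.equivFun (fun s => if m = s then (1:k) else 0) j)).mul
        (MvPolynomial.isHomogeneous_X k m)
    · intro r j
      have h1 : MvPolynomial.eval r (∑ m : Fin 4, MvPolynomial.C
          (bC.equivFun (fun s => if m = s then (1:k) else 0) j) * MvPolynomial.X m)
          = ∑ m : Fin 4, bC.equivFun (fun s => if m = s then (1:k) else 0) j * r m := by
        simp
      rw [h1]
      conv_rhs => rw [pi_eq_sum_univ r]
      rw [map_sum]
      simp [Finset.sum_apply, mul_comm]
  -- the quadrics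
  obtain ⟨Q, hQhom, hQeval⟩ : ∃ Q : Fin 6 → MvPolynomial (Fin 4) k,
      (∀ m, (Q m).IsHomogeneous 2) ∧
      (∀ (r : Fin 4 → k), (fun m => MvPolynomial.eval r (Q m)) =
        (bC.equivFun r 0 * bC.equivFun r 1) • segV k x0 y0
        + (bC.equivFun r 1 * bC.equivFun r 1) • segV k x0 y1
        + (bC.equivFun r 0 * bC.equivFun r 2) • segV k x1 y0
        + (bC.equivFun r 1 * bC.equivFun r 2) • segV k x1 y1
        + (bC.equivFun r 0 * bC.equivFun r 3) • segV k x2 y0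
        + (bC.equivFun r 1 * bC.equivFun r 3) • segV k x2 y1) := by
    refine ⟨fun m =>
      MvPolynomial.C (segV k x0 y0 m) * (L 0 * L 1) + MvPolynomial.C (segV k x0 y1 m) * (L 1 * L 1)
      + MvPolynomial.C (segV k x1 y0 m) * (L 0 * L 2)
      + MvPolynomial.C (segV k x1 y1 m) * (L 1 * L 2)
      + MvPolynomial.C (segV k x2 y0 m) * (L 0 * L 3)
      + MvPolynomial.C (segV k x2 y1 m) * (L 1 * L 3), ?_, ?_⟩
    · intro m
      have hterm : ∀ (c : k) (i j : Fin 4), (MvPolynomial.C c * (L i * L j)).IsHomogeneous 2 := by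
        intro c i j
        simpa using (MvPolynomial.isHomogeneous_C (Fin 4) c).mul ((hLhom i).mul (hLhom j))
      exact ((((((hterm _ _ _).add (hterm _ _ _)).add (hterm _ _ _)).add
        (hterm _ _ _)).add (hterm _ _ _)).add (hterm _ _ _))
    · intro r
      funext m
      simp only [map_add, map_mul, MvPolynomial.eval_C, hLeval, Pi.add_apply,
        Pi.smul_apply, smul_eq_mul]
      ring
  -- helpers
  have hψinj : ∀ v w : Fin 4 → k, bC.equivFun v = bC.equivFun w → v = w :=
    fun v w h => bC.equivFun.injective h
  have hψne : ∀ v : Fin 4 → k, v ≠ 0 → bC.equivFun v ≠ 0 := by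
    intro v hv h
    exact hv (hψinj v 0 (by rw [h, map_zero]))
  have hmemWL : ∀ z : Pk k 6, z ∈ projLin (WL k l a) ↔ π z.rep = 0 := by
    intro z
    change z.rep ∈ WL k l a ↔ _
    rw [← hker, LinearMap.mem_ker]
  have hproj : ∀ (z : Pk k 6) (h : π z.rep ≠ 0),
      projFrom k π z = Projectivization.mk k (π z.rep) h := by
    intro z h
    rw [projFrom, dif_pos h]
  have hQzero : ∀ r : Fin 4 → k, (∀ m, MvPolynomial.eval r (Q m) = 0) ↔
      ((bC.equivFun r 0 = 0 ∧ bC.equivFun r 1 = 0) ∨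
       (bC.equivFun r 1 = 0 ∧ bC.equivFun r 2 = 0 ∧ bC.equivFun r 3 = 0)) := by
    intro r
    constructor
    · intro h
      have hv : (fun m => MvPolynomial.eval r (Q m)) = 0 := funext h
      rw [hQeval r] at hv
      obtain ⟨e0, e1, e2, e3, e4, e5⟩ := hT6 _ _ _ _ _ _ hv
      have hW1 : bC.equivFun r 1 = 0 := mul_self_eq_zero.mp e1
      by_cases h0 : bC.equivFun r 0 = 0
      · exact Or.inl ⟨h0, hW1⟩
      · refine Or.inr ⟨hW1, ?_, ?_⟩
        · exact (mul_eq_zero.mp e2).resolve_left h0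
        · exact (mul_eq_zero.mp e4).resolve_left h0
    · intro h m
      have he := congrFun (hQeval r) m
      rw [he]
      rcases h with ⟨h0, h1⟩ | ⟨h1, h2, h3⟩
      · simp [Pi.add_apply, Pi.smul_apply, smul_eq_mul, h0, h1]
      · simp [Pi.add_apply, Pi.smul_apply, smul_eq_mul, h1, h2, h3]
  -- image of F2 is the line
  have himg2 : projFrom k π '' (F2set k l \ projLin (WL k l a))
      = {q : Pk k 4 | bC.equivFun q.rep 0 = 0 ∧ bC.equivFun q.rep 1 = 0} := by
    ext q
    simp only [Set.mem_image, Set.mem_diff, Set.mem_setOf_eq]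
    constructor
    · rintro ⟨z, ⟨hzF2, hzL⟩, rfl⟩
      obtain ⟨p', q', hpl, rfl⟩ := hzF2
      have hπz : π (segre k p' q').rep ≠ 0 := fun h => hzL ((hmemWL _).mpr h)
      have hzrep : ∃ c : k, c ≠ 0 ∧ (segre k p' q').rep = c • segV k p'.rep q'.rep :=
        rep_mk (segV k p'.rep q'.rep) (segV_ne_zero k p'.rep_nonzero q'.rep_nonzero)
      obtain ⟨c, hc, hzrep⟩ := hzrep
      obtain ⟨d, hd, hqrep⟩ := rep_mk (π (segre k p' q').rep) hπz
      rw [← hspan] at hpl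
      obtain ⟨s, t, hst⟩ := Submodule.mem_span_pair.mp hpl
      obtain ⟨v0, v1, hv⟩ := hYdec q'.rep
      have hval : bC.equivFun (π (segV k p'.rep q'.rep)) = ![0*v0, 0*v1, s*v1, t*v1] := by
        have harg : (0:k)•x0 + s•x1 + t•x2 = p'.rep := by rw [zero_smul, zero_add, hst]
        have h' := hσ 0 s t v0 v1
        rw [harg, ← hv] at h'
        exact h'
      have hkey : bC.equivFun (projFrom k π (segre k p' q')).rep
          = (d * c) • ![0*v0, 0*v1, s*v1, t*v1] := by
        rw [hproj _ hπz, hqrep, hzrep]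
        simp only [map_smul]
        rw [hval, smul_smul]
      constructor
      · have h := congrFun hkey 0
        simp only [Pi.smul_apply, smul_eq_mul] at h
        rw [h]; simp
      · have h := congrFun hkey 1
        simp only [Pi.smul_apply, smul_eq_mul] at h
        rw [h]; simp
    · rintro ⟨h0, h1⟩
      have hr : q.rep ≠ 0 := q.rep_nonzero
      have hst : ¬(bC.equivFun q.rep 2 = 0 ∧ bC.equivFun q.rep 3 = 0) := by
        rintro ⟨hs, ht⟩
        apply hψne q.rep hr
        funext j
        rw [Pi.zero_apply]
        fin_cases j
        · exact h0
        · exact h1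
        · exact hs
        · exact ht
      have hxne : bC.equivFun q.rep 2 • x1 + bC.equivFun q.rep 3 • x2 ≠ 0 :=
        fun h => hst (h12' _ _ h)
      obtain ⟨c1, hc1, hc1rep⟩ := rep_mk _ hxne
      obtain ⟨c2, hc2, hc2rep⟩ := rep_mk y1 hy1
      have hπval : π (segV k (bC.equivFun q.rep 2 • x1 + bC.equivFun q.rep 3 • x2) y1)
          = q.rep := by
        apply hψinj
        have harg : (0:k)•x0 + (bC.equivFun q.rep 2)•x1 + (bC.equivFun q.rep 3)•x2
            = bC.equivFun q.rep 2 • x1 + bC.equivFun q.rep 3 • x2 := by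
          rw [zero_smul, zero_add]
        have harg2 : (0:k)•y0 + (1:k)•y1 = y1 := by rw [zero_smul, one_smul, zero_add]
        have h' := hσ 0 (bC.equivFun q.rep 2) (bC.equivFun q.rep 3) 0 1
        rw [harg, harg2] at h'
        rw [h']
        funext j
        fin_cases j
        · simp [h0]
        · simp [h1]
        · simp
        · simp
      have hsvne : segV k (Projectivization.mk k _ hxne).rep
          (Projectivization.mk k y1 hy1).rep ≠ 0 :=
        segV_ne_zero k (Projectivization.rep_nonzero _) (Projectivization.rep_nonzero _)
      obtain ⟨c3, hc3, hc3rep⟩ := rep_mk _ hsvne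
      have hsv : segV k (Projectivization.mk k _ hxne).rep (Projectivization.mk k y1 hy1).rep
          = (c1 * c2) • segV k (bC.equivFun q.rep 2 • x1 + bC.equivFun q.rep 3 • x2) y1 := by
        rw [hc1rep, hc2rep, segV_smul_left, segV_smul_right, smul_smul]
      have hπz : π (segre k (Projectivization.mk k _ hxne) (Projectivization.mk k y1 hy1)).rep
          = (c3 * (c1 * c2)) • q.rep := by
        have hc3rep' : (segre k (Projectivization.mk k _ hxne)
            (Projectivization.mk k y1 hy1)).rep = c3 • segV k (Projectivization.mk k _ hxne).rep
            (Projectivization.mk k y1 hy1).rep := hc3rep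
        rw [hc3rep', hsv, map_smul, map_smul, hπval, smul_smul]
      have hπzne : π (segre k (Projectivization.mk k _ hxne)
          (Projectivization.mk k y1 hy1)).rep ≠ 0 := by
        rw [hπz]
        exact smul_ne_zero (mul_ne_zero hc3 (mul_ne_zero hc1 hc2)) hr
      refine ⟨segre k (Projectivization.mk k _ hxne) (Projectivization.mk k y1 hy1),
        ⟨⟨Projectivization.mk k _ hxne, Projectivization.mk k y1 hy1, ?_, rfl⟩, ?_⟩, ?_⟩
      · rw [hc1rep]
        exact Submodule.smul_mem _ _ (Submodule.add_mem _
          (Submodule.smul_mem _ _ hx1l) (Submodule.smul_mem _ _ hx2l))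
      · intro hmem
        exact hπzne ((hmemWL _).mp hmem)
      · rw [hproj _ hπzne]
        conv_rhs => rw [← Projectivization.mk_rep q]
        rw [Projectivization.mk_eq_mk_iff']
        exact ⟨c3 * (c1 * c2), hπz.symm⟩
  -- image of F1 is the point
  have hπT0ne : π (segV k x0 y0) ≠ 0 := by
    intro h
    have h' := hψ0 0
    rw [h, map_zero] at h'
    simp at h'
  have hx0ne : x0 ≠ 0 := fun h => hx0l (h ▸ Submodule.zero_mem l)
  have himg1 : projFrom k π '' (F1set k a \ projLin (WL k l a))
      = {q : Pk k 4 | bC.equivFun q.rep 1 = 0 ∧ bC.equivFun q.rep 2 = 0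
          ∧ bC.equivFun q.rep 3 = 0} := by
    ext q
    simp only [Set.mem_image, Set.mem_diff, Set.mem_setOf_eq]
    constructor
    · rintro ⟨z, ⟨hzF1, hzL⟩, rfl⟩
      obtain ⟨p', rfl⟩ := hzF1
      have hπz : π (segre k p' a).rep ≠ 0 := fun h => hzL ((hmemWL _).mpr h)
      have hzrep : ∃ c : k, c ≠ 0 ∧ (segre k p' a).rep = c • segV k p'.rep a.rep :=
        rep_mk (segV k p'.rep a.rep) (segV_ne_zero k p'.rep_nonzero a.rep_nonzero)
      obtain ⟨c, hc, hzrep⟩ := hzrep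
      obtain ⟨d, hd, hqrep⟩ := rep_mk (π (segre k p' a).rep) hπz
      obtain ⟨u0, u1, u2, hxdec⟩ := hXdec p'.rep
      have hval : bC.equivFun (π (segV k p'.rep a.rep)) = ![u0*1, u0*0, u1*0, u2*0] := by
        have harg2 : (1:k)•y0 + (0:k)•y1 = a.rep := by
          rw [one_smul, zero_smul, add_zero, hy0def]
        have h' := hσ u0 u1 u2 1 0
        rw [← hxdec, harg2] at h'
        exact h'
      have hkey : bC.equivFun (projFrom k π (segre k p' a)).rep
          = (d * c) • ![u0*1, u0*0, u1*0, u2*0] := by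
        rw [hproj _ hπz, hqrep, hzrep]
        simp only [map_smul]
        rw [hval, smul_smul]
      refine ⟨?_, ?_, ?_⟩
      · have h := congrFun hkey 1
        simp only [Pi.smul_apply, smul_eq_mul] at h
        rw [h]; simp
      · have h := congrFun hkey 2
        simp only [Pi.smul_apply, smul_eq_mul] at h
        rw [h]; simp
      · have h := congrFun hkey 3
        simp only [Pi.smul_apply, smul_eq_mul] at h
        rw [h]; simp
    · rintro ⟨h1, h2, h3⟩
      have hr : q.rep ≠ 0 := q.rep_nonzero
      have hw0 : bC.equivFun q.rep 0 ≠ 0 := by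
        intro h0
        apply hψne q.rep hr
        funext j
        rw [Pi.zero_apply]
        fin_cases j
        · exact h0
        · exact h1
        · exact h2
        · exact h3
      obtain ⟨c1, hc1, hc1rep⟩ := rep_mk x0 hx0ne
      have hsvne : segV k (Projectivization.mk k x0 hx0ne).rep a.rep ≠ 0 :=
        segV_ne_zero k (Projectivization.rep_nonzero _) a.rep_nonzero
      obtain ⟨c3, hc3, hc3rep⟩ := rep_mk _ hsvne
      have hsv : segV k (Projectivization.mk k x0 hx0ne).rep a.rep
          = c1 • segV k x0 y0 := by
        rw [hc1rep, segV_smul_left, hy0def]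
      have hπzrep : π (segre k (Projectivization.mk k x0 hx0ne) a).rep
          = (c3 * c1) • π (segV k x0 y0) := by
        have hc3rep' : (segre k (Projectivization.mk k x0 hx0ne) a).rep
            = c3 • segV k (Projectivization.mk k x0 hx0ne).rep a.rep := hc3rep
        rw [hc3rep', hsv, map_smul, map_smul, smul_smul]
      have hπzne : π (segre k (Projectivization.mk k x0 hx0ne) a).rep ≠ 0 := by
        rw [hπzrep]
        exact smul_ne_zero (mul_ne_zero hc3 hc1) hπT0ne
      refine ⟨segre k (Projectivization.mk k x0 hx0ne) a,
        ⟨⟨Projectivization.mk k x0 hx0ne, rfl⟩, ?_⟩, ?_⟩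
      · intro hmem
        exact hπzne ((hmemWL _).mp hmem)
      · rw [hproj _ hπzne]
        conv_rhs => rw [← Projectivization.mk_rep q]
        rw [Projectivization.mk_eq_mk_iff']
        refine ⟨(c3 * c1) * (bC.equivFun q.rep 0)⁻¹, ?_⟩
        apply hψinj
        rw [map_smul, hπzrep, map_smul]
        funext j
        simp only [Pi.smul_apply, smul_eq_mul, hψ0 j]
        fin_cases j
        · simp only [Module.Basis.equivFun_apply] at hw0
          simp
          field_simp [hw0]
        · simp [h1]
        · simp [h2]
        · simp [h3]
  -- assemble
  have hWBline := hB.symm.trans himg2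
  have hP0set := hP0.symm.trans himg1
  refine ⟨Q, hQhom, ?_, ?_⟩
  · ext q
    simp only [Set.mem_setOf_eq, Set.mem_union, Set.mem_singleton_iff]
    rw [hQzero q.rep]
    constructor
    · rintro (h | h)
      · left
        rw [hWBline]
        exact h
      · right
        have hq : q ∈ ({P0} : Set (Pk k 4)) := by rw [hP0set]; exact h
        simpa using hq
    · rintro (h | h)
      · left
        rw [hWBline] at h
        exact h
      · right
        have hq : q ∈ ({P0} : Set (Pk k 4)) := by simp [h]
        rw [hP0set] at hq
        exact hq
  · rintro p ⟨p', q', rfl⟩ hpF1 hpF2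
    obtain ⟨u0, u1, u2, hxdec⟩ := hXdec p'.rep
    obtain ⟨v0, v1, hydec⟩ := hYdec q'.rep
    have hu0 : u0 ≠ 0 := by
      intro h
      apply hpF2
      refine ⟨p', q', ?_, rfl⟩
      rw [hxdec, h, zero_smul, zero_add]
      exact Submodule.add_mem _ (Submodule.smul_mem _ _ hx1l) (Submodule.smul_mem _ _ hx2l)
    have hv1 : v1 ≠ 0 := by
      intro h
      apply hpF1
      refine ⟨p', ?_⟩
      have hq'a : q' = a := by
        rw [← Projectivization.mk_rep q', ← Projectivization.mk_rep a]
        rw [Projectivization.mk_eq_mk_iff']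
        refine ⟨v0, ?_⟩
        rw [hydec, h, zero_smul, add_zero, hy0def]
      rw [hq'a]
    obtain ⟨c, hc, hcrep⟩ := rep_mk (segV k p'.rep q'.rep)
      (segV_ne_zero k p'.rep_nonzero q'.rep_nonzero)
    have hσval : bC.equivFun (π (segV k p'.rep q'.rep)) = ![u0*v0, u0*v1, u1*v1, u2*v1] := by
      have h' := hσ u0 u1 u2 v0 v1
      rw [← hxdec, ← hydec] at h'
      exact h'
    have hπsegne : π (segV k p'.rep q'.rep) ≠ 0 := by
      intro h
      have h' := congrFun hσval 1
      rw [h, map_zero] at h'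
      simp only [Pi.zero_apply] at h'
      exact (mul_ne_zero hu0 hv1) (by simpa using h'.symm)
    have hπpne : π (segre k p' q').rep ≠ 0 := by
      have hcrep' : (segre k p' q').rep = c • segV k p'.rep q'.rep := hcrep
      rw [hcrep', map_smul]
      exact smul_ne_zero hc hπsegne
    obtain ⟨d, hd, hdrep⟩ := rep_mk (π (segre k p' q').rep) hπpne
    have hrrep : (projFrom k π (segre k p' q')).rep
        = (d * c) • π (segV k p'.rep q'.rep) := by
      rw [hproj _ hπpne, hdrep]
      have hcrep' : (segre k p' q').rep = c • segV k p'.rep q'.rep := hcrep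
      rw [hcrep', map_smul, smul_smul]
    have hW : bC.equivFun (projFrom k π (segre k p' q')).rep
        = (d*c) • ![u0*v0, u0*v1, u1*v1, u2*v1] := by
      rw [hrrep, map_smul, hσval]
    have hW0 : bC.equivFun (projFrom k π (segre k p' q')).rep 0 = (d*c) * (u0*v0) := by
      have := congrFun hW 0; simpa using this
    have hW1 : bC.equivFun (projFrom k π (segre k p' q')).rep 1 = (d*c) * (u0*v1) := by
      have := congrFun hW 1; simpa using this
    have hW2 : bC.equivFun (projFrom k π (segre k p' q')).rep 2 = (d*c) * (u1*v1) := by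
      have := congrFun hW 2; simpa using this
    have hW3 : bC.equivFun (projFrom k π (segre k p' q')).rep 3 = (d*c) * (u2*v1) := by
      have := congrFun hW 3; simpa using this
    have hvec : (fun m => MvPolynomial.eval (projFrom k π (segre k p' q')).rep (Q m))
        = ((d*c)^2 * (u0*v1)) • segV k p'.rep q'.rep := by
      rw [hQeval, hW0, hW1, hW2, hW3]
      conv_rhs => rw [hxdec, hydec]
      rw [segV_expand]
      module
    have hne : (fun m => MvPolynomial.eval (projFrom k π (segre k p' q')).rep (Q m)) ≠ 0 := by
      rw [hvec]
      exact smul_ne_zero (mul_ne_zero (pow_ne_zero 2 (mul_ne_zero hd hc))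
        (mul_ne_zero hu0 hv1)) (segV_ne_zero k p'.rep_nonzero q'.rep_nonzero)
    refine ⟨hne, ?_⟩
    have hmk : Projectivization.mk k _ hne = Projectivization.mk k (segV k p'.rep q'.rep)
        (segV_ne_zero k p'.rep_nonzero q'.rep_nonzero) := by
      rw [Projectivization.mk_eq_mk_iff']
      exact ⟨(d*c)^2 * (u0*v1), hvec.symm⟩
    exact hmk
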